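/- Let D ⊂ ℝ³ be a nonempty bounded open set, k > 0, and let f ∈ L²(D;ℂ) (extended by zero outside D). Define u(x) = ∫_D G₀(x,y) f(y) dy for x outside the closure of D. Then 4π|x|·e^{−ik|x|}·u(x) + f̂(k·x/|x|) → 0 as |x| → ∞, where f̂(ξ) = ∫_D e^{−i ξ·y} f(y) dy is the Fourier transform of f. In other words, u(x) = −(e^{ik|x|}/(4π|x|))·f̂(k x̂) + o(1/|x|) in the far field. -/

import Mathlib

open MeasureTheory Complex Filter

noncomputable abbrev E3 : Type := EuclideanSpace ℝ (Fin 3)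

/-- The outgoing Green function of the Helmholtz operator `Δ + k²` in `ℝ³`:
`G₀(x,y) = −e^{ik|x−y|}/(4π|x−y|)`. -/
noncomputable def G0 (k : ℝ) (x y : E3) : ℂ :=
  - Complex.exp (Complex.I * k * ‖x - y‖) / (4 * Real.pi * ‖x - y‖)

/-- The Fourier transform of `f` (supported in `D`): `f̂(ξ) = ∫_D e^{−iξ·y} f(y) dy`. -/
noncomputable def fourierT (D : Set E3) (f : E3 → ℂ) (ξ : E3) : ℂ :=
  ∫ y in D, Complex.exp (-Complex.I * ((inner ℝ ξ y : ℝ) : ℂ)) * f y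

/-- ratio estimate -/
lemma aux_ratio (x y : E3) (hx : ‖y‖ + 1 ≤ ‖x‖) :
    |‖x‖ / ‖x - y‖ - 1| ≤ ‖y‖ * (‖x‖ - ‖y‖)⁻¹ := by
  have hy : (0:ℝ) ≤ ‖y‖ := norm_nonneg _
  have hb1 : ‖x‖ - ‖y‖ ≤ ‖x - y‖ := norm_sub_norm_le x y
  have hb : (0:ℝ) < ‖x - y‖ := by linarith
  have h1 : |‖x‖ - ‖x - y‖| ≤ ‖y‖ := by
    have := abs_norm_sub_norm_le x (x - y)
    simpa using this
  have : ‖x‖ / ‖x - y‖ - 1 = (‖x‖ - ‖x - y‖) / ‖x - y‖ := by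
    field_simp
  rw [this, abs_div, abs_of_pos hb]
  calc |‖x‖ - ‖x - y‖| / ‖x - y‖ ≤ ‖y‖ / ‖x - y‖ := by
        exact (div_le_div_iff_of_pos_right hb).mpr h1
    _ ≤ ‖y‖ / (‖x‖ - ‖y‖) := by
        apply div_le_div_of_nonneg_left hy (by linarith) hb1
    _ = ‖y‖ * (‖x‖ - ‖y‖)⁻¹ := div_eq_mul_inv _ _

/-- phase estimate -/
lemma aux_theta (x y : E3) (hx : ‖y‖ + 1 ≤ ‖x‖) :
    |‖x - y‖ - ‖x‖ + ‖x‖⁻¹ * (inner ℝ x y : ℝ)| ≤ ‖y‖ ^ 2 * (‖x‖ - ‖y‖)⁻¹ := by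
  set a := ‖x‖ with hadef
  set b := ‖x - y‖ with hbdef
  set p := (inner ℝ x y : ℝ) with hpdef
  have hy : (0:ℝ) ≤ ‖y‖ := norm_nonneg _
  have ha : (0:ℝ) < a := by linarith
  have hb1 : a - ‖y‖ ≤ b := norm_sub_norm_le x y
  have hb : (0:ℝ) < b := by linarith
  have hp : |p| ≤ a * ‖y‖ := abs_real_inner_le_norm x y
  have hb2 : b ^ 2 = a ^ 2 - 2 * p + ‖y‖ ^ 2 := by
    simpa [hadef, hbdef, hpdef] using norm_sub_sq_real x y
  set q := a⁻¹ * p with hqdef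
  have haq : a * q = p := by
    rw [hqdef]; field_simp
  have hq : |q| ≤ ‖y‖ := by
    rw [hqdef, abs_mul, abs_inv, abs_of_pos ha]
    calc a⁻¹ * |p| ≤ a⁻¹ * (a * ‖y‖) := by
          apply mul_le_mul_of_nonneg_left hp (by positivity)
      _ = ‖y‖ := by field_simp
  obtain ⟨hq1, hq2⟩ := abs_le.1 hq
  have hd : (0:ℝ) < b + (a - q) := by linarith
  have key : (b - (a - q)) * (b + (a - q)) = ‖y‖ ^ 2 - q ^ 2 := by
    linear_combination hb2 + 2 * haq
  have hθ : b - a + q = (‖y‖ ^ 2 - q ^ 2) / (b + (a - q)) := by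
    rw [eq_div_iff hd.ne']
    linear_combination key
  have hq2' : q ^ 2 ≤ ‖y‖ ^ 2 := sq_le_sq' hq1 hq2
  have habs : |‖y‖ ^ 2 - q ^ 2| ≤ ‖y‖ ^ 2 := by
    rw [abs_le]; constructor <;> nlinarith [sq_nonneg q]
  rw [hθ, abs_div, abs_of_pos hd]
  calc |‖y‖ ^ 2 - q ^ 2| / (b + (a - q)) ≤ ‖y‖ ^ 2 / (b + (a - q)) := by
        exact (div_le_div_iff_of_pos_right hd).mpr habs
    _ ≤ ‖y‖ ^ 2 / (a - ‖y‖) := by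
        apply div_le_div_of_nonneg_left (by positivity) (by linarith) (by linarith)
    _ = ‖y‖ ^ 2 * (a - ‖y‖)⁻¹ := div_eq_mul_inv _ _

/-- pointwise far-field limit of the reduced kernel -/
lemma bracket_tendsto (k : ℝ) (y : E3) :
    Tendsto (fun x : E3 =>
      Complex.exp (-Complex.I * ((inner ℝ ((k : ℝ) • (‖x‖⁻¹ • x)) y : ℝ) : ℂ))
        + ((4 * Real.pi * ‖x‖ : ℝ) : ℂ) * Complex.exp (-Complex.I * k * ‖x‖) * G0 k x y)
      (Bornology.cobounded E3) (nhds 0) := by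
  have ha : Tendsto (fun x : E3 => ‖x‖) (Bornology.cobounded E3) atTop :=
    tendsto_norm_cobounded_atTop
  have hainv : Tendsto (fun x : E3 => (‖x‖ - ‖y‖)⁻¹) (Bornology.cobounded E3) (nhds 0) := by
    apply Tendsto.inv_tendsto_atTop
    have := tendsto_atTop_add_const_right _ (-‖y‖) ha
    simpa [sub_eq_add_neg] using this
  have hr : Tendsto (fun x : E3 => ‖x‖ / ‖x - y‖) (Bornology.cobounded E3) (nhds 1) := by
    have h0 : Tendsto (fun x : E3 => ‖x‖ / ‖x - y‖ - 1) (Bornology.cobounded E3) (nhds 0) := by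
      apply squeeze_zero_norm' (a := fun x : E3 => ‖y‖ * (‖x‖ - ‖y‖)⁻¹)
      · filter_upwards [eventually_cobounded_le_norm (‖y‖ + 1)] with x hx
        simpa [Real.norm_eq_abs] using aux_ratio x y hx
      · simpa using hainv.const_mul ‖y‖
    have := h0.add_const 1
    simpa using this
  have hθ : Tendsto (fun x : E3 => ‖x - y‖ - ‖x‖ + ‖x‖⁻¹ * (inner ℝ x y : ℝ))
      (Bornology.cobounded E3) (nhds 0) := by
    apply squeeze_zero_norm' (a := fun x : E3 => ‖y‖ ^ 2 * (‖x‖ - ‖y‖)⁻¹)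
    · filter_upwards [eventually_cobounded_le_norm (‖y‖ + 1)] with x hx
      simpa [Real.norm_eq_abs] using aux_theta x y hx
    · simpa using hainv.const_mul (‖y‖ ^ 2)
  have hprod : Tendsto (fun x : E3 => ((‖x‖ / ‖x - y‖ : ℝ) : ℂ) *
      Complex.exp (Complex.I * ((k * (‖x - y‖ - ‖x‖ + ‖x‖⁻¹ * (inner ℝ x y : ℝ)) : ℝ) : ℂ)))
      (Bornology.cobounded E3) (nhds 1) := by
    have h1 : Tendsto (fun x : E3 => ((‖x‖ / ‖x - y‖ : ℝ) : ℂ))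
        (Bornology.cobounded E3) (nhds 1) := by
      have := (Complex.continuous_ofReal.tendsto 1).comp hr
      simpa [Function.comp_def] using this
    have h3 : Tendsto (fun x : E3 =>
        ((k * (‖x - y‖ - ‖x‖ + ‖x‖⁻¹ * (inner ℝ x y : ℝ)) : ℝ) : ℂ))
        (Bornology.cobounded E3) (nhds 0) := by
      have h4 := hθ.const_mul k
      rw [mul_zero] at h4
      have := (Complex.continuous_ofReal.tendsto 0).comp h4
      simpa [Function.comp_def] using this
    have h2 : Tendsto (fun x : E3 => Complex.exp (Complex.I *
        ((k * (‖x - y‖ - ‖x‖ + ‖x‖⁻¹ * (inner ℝ x y : ℝ)) : ℝ) : ℂ)))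
        (Bornology.cobounded E3) (nhds 1) := by
      have h5 := h3.const_mul Complex.I
      rw [mul_zero] at h5
      have := (Complex.continuous_exp.tendsto 0).comp h5
      simpa [Function.comp_def] using this
    have := h1.mul h2
    simpa using this
  have hg : Tendsto (fun x : E3 => ‖(1 : ℂ) - ((‖x‖ / ‖x - y‖ : ℝ) : ℂ) *
      Complex.exp (Complex.I * ((k * (‖x - y‖ - ‖x‖ + ‖x‖⁻¹ * (inner ℝ x y : ℝ)) : ℝ) : ℂ))‖)
      (Bornology.cobounded E3) (nhds 0) := by
    have := ((tendsto_const_nhds (x := (1:ℂ))).sub hprod).norm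
    simpa using this
  apply squeeze_zero_norm' _ hg
  filter_upwards [eventually_cobounded_le_norm (‖y‖ + 1)] with x hx
  have hy : (0:ℝ) ≤ ‖y‖ := norm_nonneg _
  have ha0 : (0:ℝ) < ‖x‖ := by linarith
  have hb1 : ‖x‖ - ‖y‖ ≤ ‖x - y‖ := norm_sub_norm_le x y
  have hb0 : (0:ℝ) < ‖x - y‖ := by linarith
  have hπ : (0:ℝ) < Real.pi := Real.pi_pos
  set a := ‖x‖ with hadef
  set b := ‖x - y‖ with hbdef
  set p := (inner ℝ x y : ℝ) with hpdef
  have hw : ((inner ℝ ((k : ℝ) • (‖x‖⁻¹ • x)) y : ℝ)) = k * (a⁻¹ * p) := by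
    rw [real_inner_smul_left, real_inner_smul_left]
  have hbc : ((b : ℝ) : ℂ) ≠ 0 := by exact_mod_cast hb0.ne'
  have hπc : ((Real.pi : ℝ) : ℂ) ≠ 0 := by exact_mod_cast hπ.ne'
  have hdiv : ((4 * Real.pi * a : ℝ) : ℂ) / (4 * (Real.pi : ℂ) * b) = ((a / b : ℝ) : ℂ) := by
    push_cast
    field_simp
  have e1 : ((4 * Real.pi * a : ℝ) : ℂ) * Complex.exp (-Complex.I * k * a) * G0 k x y
      = -(((a / b : ℝ) : ℂ) * Complex.exp (Complex.I * ((k * (b - a) : ℝ) : ℂ))) := by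
    show ((4 * Real.pi * a : ℝ) : ℂ) * Complex.exp (-Complex.I * k * a) *
        (- Complex.exp (Complex.I * k * b) / (4 * Real.pi * b)) = _
    rw [show ((4 * Real.pi * a : ℝ) : ℂ) * Complex.exp (-Complex.I * k * a) *
        (- Complex.exp (Complex.I * k * b) / (4 * (Real.pi : ℂ) * b)) =
        -((((4 * Real.pi * a : ℝ) : ℂ) / (4 * (Real.pi : ℂ) * b)) *
          (Complex.exp (-Complex.I * k * a) * Complex.exp (Complex.I * k * b))) by ring]
    rw [← Complex.exp_add, hdiv,
      show (-Complex.I * k * a + Complex.I * k * b : ℂ)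
        = Complex.I * ((k * (b - a) : ℝ) : ℂ) by push_cast; ring]
  have e2 : Complex.exp (-Complex.I * ((k * (a⁻¹ * p) : ℝ) : ℂ)) *
        ((1 : ℂ) - ((a / b : ℝ) : ℂ) *
          Complex.exp (Complex.I * ((k * (b - a + a⁻¹ * p) : ℝ) : ℂ)))
      = Complex.exp (-Complex.I * ((k * (a⁻¹ * p) : ℝ) : ℂ))
        - ((a / b : ℝ) : ℂ) * Complex.exp (Complex.I * ((k * (b - a) : ℝ) : ℂ)) := by
    rw [mul_sub, mul_one]
    congr 1
    calc Complex.exp (-Complex.I * ((k * (a⁻¹ * p) : ℝ) : ℂ)) *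
          (((a / b : ℝ) : ℂ) * Complex.exp (Complex.I * ((k * (b - a + a⁻¹ * p) : ℝ) : ℂ)))
        = ((a / b : ℝ) : ℂ) * Complex.exp (-Complex.I * ((k * (a⁻¹ * p) : ℝ) : ℂ)
            + Complex.I * ((k * (b - a + a⁻¹ * p) : ℝ) : ℂ)) := by
          rw [Complex.exp_add]; ring
      _ = ((a / b : ℝ) : ℂ) * Complex.exp (Complex.I * ((k * (b - a) : ℝ) : ℂ)) := by
          rw [show (-Complex.I * ((k * (a⁻¹ * p) : ℝ) : ℂ)
            + Complex.I * ((k * (b - a + a⁻¹ * p) : ℝ) : ℂ))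
            = Complex.I * ((k * (b - a) : ℝ) : ℂ) by push_cast; ring]
  calc ‖Complex.exp (-Complex.I * ((inner ℝ ((k : ℝ) • (‖x‖⁻¹ • x)) y : ℝ) : ℂ))
        + ((4 * Real.pi * a : ℝ) : ℂ) * Complex.exp (-Complex.I * k * a) * G0 k x y‖
      = ‖Complex.exp (-Complex.I * ((k * (a⁻¹ * p) : ℝ) : ℂ)) *
          ((1 : ℂ) - ((a / b : ℝ) : ℂ) *
            Complex.exp (Complex.I * ((k * (b - a + a⁻¹ * p) : ℝ) : ℂ)))‖ := by
        rw [hw, e1, ← sub_eq_add_neg, ← e2]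
    _ = ‖(1 : ℂ) - ((a / b : ℝ) : ℂ) *
          Complex.exp (Complex.I * ((k * (b - a + a⁻¹ * p) : ℝ) : ℂ))‖ := by
        rw [norm_mul, show -Complex.I * ((k * (a⁻¹ * p) : ℝ) : ℂ)
            = ((-(k * (a⁻¹ * p)) : ℝ) : ℂ) * Complex.I by push_cast; ring,
          Complex.norm_exp_ofReal_mul_I, one_mul]
    _ ≤ ‖(1 : ℂ) - ((a / b : ℝ) : ℂ) *
          Complex.exp (Complex.I * ((k * (b - a + a⁻¹ * p) : ℝ) : ℂ))‖ := le_rfl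

/-- in the far field, `u(x) = ∫_D G₀(x,y) f(y) dy` behaves like
`−(e^{ik|x|}/(4π|x|))·f̂(k x̂)`: one has
`4π|x|·e^{−ik|x|}·u(x) + f̂(k·x/|x|) → 0` as `|x| → ∞`. -/
theorem farfield_expansion (D : Set E3) (hne : D.Nonempty) (hDo : IsOpen D)
    (hDb : Bornology.IsBounded D) (k : ℝ) (hk : 0 < k)
    (f : Lp ℂ 2 (volume.restrict D))
    (u : E3 → ℂ) (hu : ∀ x ∉ closure D, u x = ∫ y in D, G0 k x y * f y) :
    Tendsto (fun x : E3 =>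
        ((4 * Real.pi * ‖x‖ : ℝ) : ℂ) * Complex.exp (-Complex.I * k * ‖x‖) * u x
          + fourierT D f (k • (‖x‖⁻¹ • x)))
      (Bornology.cobounded E3) (nhds 0) := by
  obtain ⟨R, hR0, hRsub⟩ := hDb.subset_closedBall_lt 0 0
  have hRc : closure D ⊆ Metric.closedBall (0 : E3) R :=
    closure_minimal hRsub Metric.isClosed_closedBall
  have hDm : MeasurableSet D := hDo.measurableSet
  haveI : IsFiniteMeasure (volume.restrict D : Measure E3) :=
    ⟨by rw [Measure.restrict_apply_univ]; exact hDb.measure_lt_top⟩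
  have hfi : Integrable (f : E3 → ℂ) (volume.restrict D) :=
    (Lp.memLp f).integrable one_le_two
  haveI : (Bornology.cobounded E3).IsCountablyGenerated := by
    rw [← comap_norm_atTop]; infer_instance
  have hπ : (0:ℝ) < Real.pi := Real.pi_pos
  set B : E3 → E3 → ℂ := fun x y =>
    Complex.exp (-Complex.I * ((inner ℝ ((k : ℝ) • (‖x‖⁻¹ • x)) y : ℝ) : ℂ))
      + ((4 * Real.pi * ‖x‖ : ℝ) : ℂ) * Complex.exp (-Complex.I * k * ‖x‖) * G0 k x y
    with hBdef
  have hnorm_exp : ∀ t : ℝ, ‖Complex.exp (-Complex.I * (t : ℂ))‖ = 1 := fun t => by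
    rw [show -Complex.I * (t : ℂ) = ((-t : ℝ) : ℂ) * Complex.I by push_cast; ring,
      Complex.norm_exp_ofReal_mul_I]
  have hG0norm : ∀ x y : E3, ‖G0 k x y‖ = (4 * Real.pi * ‖x - y‖)⁻¹ := fun x y => by
    unfold G0
    rw [norm_div, norm_neg,
      show Complex.I * k * ‖x - y‖ = ((k * ‖x - y‖ : ℝ) : ℂ) * Complex.I by push_cast; ring,
      Complex.norm_exp_ofReal_mul_I,
      show (4 * (Real.pi : ℂ) * ‖x - y‖) = ((4 * Real.pi * ‖x - y‖ : ℝ) : ℂ) by push_cast; ring,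
      _root_.Complex.norm_real, Real.norm_eq_abs,
      _root_.abs_of_nonneg (by positivity : (0:ℝ) ≤ 4 * Real.pi * ‖x - y‖), one_div]
  have hmeasG : ∀ x : E3, AEStronglyMeasurable (fun y => G0 k x y) (volume.restrict D) := by
    intro x
    have : Measurable fun y : E3 => G0 k x y := by unfold G0; fun_prop
    exact this.aestronglyMeasurable
  have hmeasE : ∀ x : E3, AEStronglyMeasurable
      (fun y : E3 => Complex.exp (-Complex.I * ((inner ℝ ((k : ℝ) • (‖x‖⁻¹ • x)) y : ℝ) : ℂ)))
      (volume.restrict D) := by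
    intro x
    have hc : Continuous fun y : E3 => (inner ℝ ((k : ℝ) • (‖x‖⁻¹ • x)) y : ℝ) :=
      continuous_const.inner continuous_id
    have : Continuous fun y : E3 =>
        Complex.exp (-Complex.I * ((inner ℝ ((k : ℝ) • (‖x‖⁻¹ • x)) y : ℝ) : ℂ)) :=
      Complex.continuous_exp.comp (continuous_const.mul (Complex.continuous_ofReal.comp hc))
    exact this.aestronglyMeasurable
  have hFmeas : ∀ x : E3, AEStronglyMeasurable (fun y => B x y * (f : E3 → ℂ) y)
      (volume.restrict D) := by
    intro x
    exact (((hmeasE x).add ((hmeasG x).const_mul _)).mul (Lp.aestronglyMeasurable f))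
  have key : Tendsto (fun x : E3 => ∫ y in D, B x y * (f : E3 → ℂ) y)
      (Bornology.cobounded E3) (nhds 0) := by
    have main := tendsto_integral_filter_of_dominated_convergence
      (μ := volume.restrict D) (F := fun (x : E3) (y : E3) => B x y * (f : E3 → ℂ) y)
      (f := fun _ : E3 => (0 : ℂ)) (l := Bornology.cobounded E3)
      (bound := fun y => 3 * ‖(f : E3 → ℂ) y‖)
      (Eventually.of_forall hFmeas)
      ?_ (hfi.norm.const_mul 3)
      (Eventually.of_forall fun y => by
        have := (bracket_tendsto k y).mul_const ((f : E3 → ℂ) y)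
        simpa [hBdef] using this)
    · simpa using main
    · filter_upwards [eventually_cobounded_le_norm (2 * R + 1)] with x hx
      rw [ae_restrict_iff' hDm]
      refine Eventually.of_forall fun y hy => ?_
      have hyR : ‖y‖ ≤ R := mem_closedBall_zero_iff.1 (hRsub hy)
      have hb1 : ‖x‖ - ‖y‖ ≤ ‖x - y‖ := norm_sub_norm_le x y
      have hb0 : (0:ℝ) < ‖x - y‖ := by linarith
      have hfrac : (4 * Real.pi * ‖x‖) * (4 * Real.pi * ‖x - y‖)⁻¹ ≤ 2 := by
        rw [← div_eq_mul_inv, div_le_iff₀ (by positivity)]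
        nlinarith
      have hBle : ‖B x y‖ ≤ 3 := by
        calc ‖B x y‖ ≤ ‖Complex.exp (-Complex.I * ((inner ℝ ((k : ℝ) • (‖x‖⁻¹ • x)) y : ℝ) : ℂ))‖
              + ‖((4 * Real.pi * ‖x‖ : ℝ) : ℂ) * Complex.exp (-Complex.I * k * ‖x‖) * G0 k x y‖ :=
            norm_add_le _ _
          _ = 1 + (4 * Real.pi * ‖x‖) * (4 * Real.pi * ‖x - y‖)⁻¹ := by
            rw [hnorm_exp, norm_mul, norm_mul, hG0norm, _root_.Complex.norm_real, Real.norm_eq_abs,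
              _root_.abs_of_nonneg (by positivity : (0:ℝ) ≤ 4 * Real.pi * ‖x‖),
              show -Complex.I * k * ‖x‖ = ((-(k * ‖x‖) : ℝ) : ℂ) * Complex.I by push_cast; ring,
              Complex.norm_exp_ofReal_mul_I, mul_one]
          _ ≤ 1 + 2 := by linarith
          _ = 3 := by norm_num
      calc ‖B x y * (f : E3 → ℂ) y‖ = ‖B x y‖ * ‖(f : E3 → ℂ) y‖ := norm_mul _ _
        _ ≤ 3 * ‖(f : E3 → ℂ) y‖ :=
          mul_le_mul_of_nonneg_right hBle (norm_nonneg _)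
  have heq : (fun x : E3 => ∫ y in D, B x y * (f : E3 → ℂ) y) =ᶠ[Bornology.cobounded E3]
      (fun x : E3 =>
        ((4 * Real.pi * ‖x‖ : ℝ) : ℂ) * Complex.exp (-Complex.I * k * ‖x‖) * u x
          + fourierT D (f : E3 → ℂ) (k • (‖x‖⁻¹ • x))) := by
    filter_upwards [eventually_cobounded_le_norm (2 * R + 1)] with x hx
    have hxc : x ∉ closure D := by
      intro hmem
      have := mem_closedBall_zero_iff.1 (hRc hmem)
      linarith
    rw [hu x hxc, fourierT]
    have hInt1 : Integrable (fun y => G0 k x y * (f : E3 → ℂ) y) (volume.restrict D) := by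
      apply hfi.bdd_mul (hmeasG x) (c := (4 * Real.pi * (R + 1))⁻¹)
      rw [ae_restrict_iff' hDm]
      refine Eventually.of_forall fun y hy => ?_
      have hyR : ‖y‖ ≤ R := mem_closedBall_zero_iff.1 (hRsub hy)
      have hb1 : ‖x‖ - ‖y‖ ≤ ‖x - y‖ := norm_sub_norm_le x y
      rw [hG0norm]
      apply inv_anti₀ (by positivity)
      nlinarith
    have hInt2 : Integrable (fun y : E3 =>
        Complex.exp (-Complex.I * ((inner ℝ ((k : ℝ) • (‖x‖⁻¹ • x)) y : ℝ) : ℂ)) * (f : E3 → ℂ) y)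
        (volume.restrict D) :=
      hfi.bdd_mul (hmeasE x) (ae_of_all _ fun y => le_of_eq (hnorm_exp _))
    calc (∫ y in D, B x y * (f : E3 → ℂ) y)
        = ∫ y in D,
            (Complex.exp (-Complex.I * ((inner ℝ ((k : ℝ) • (‖x‖⁻¹ • x)) y : ℝ) : ℂ)) *
              (f : E3 → ℂ) y
            + (((4 * Real.pi * ‖x‖ : ℝ) : ℂ) * Complex.exp (-Complex.I * k * ‖x‖)) *
              (G0 k x y * (f : E3 → ℂ) y)) := by
          apply integral_congr_ae
          refine ae_of_all _ fun y => ?_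
          simp only [hBdef]
          ring
      _ = (∫ y in D, Complex.exp (-Complex.I * ((inner ℝ ((k : ℝ) • (‖x‖⁻¹ • x)) y : ℝ) : ℂ)) *
              (f : E3 → ℂ) y)
          + ∫ y in D, (((4 * Real.pi * ‖x‖ : ℝ) : ℂ) * Complex.exp (-Complex.I * k * ‖x‖)) *
              (G0 k x y * (f : E3 → ℂ) y) :=
          integral_add hInt2 (hInt1.const_mul _)
      _ = ((4 * Real.pi * ‖x‖ : ℝ) : ℂ) * Complex.exp (-Complex.I * k * ‖x‖) *
            (∫ y in D, G0 k x y * (f : E3 → ℂ) y)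
          + ∫ y in D, Complex.exp (-Complex.I * ((inner ℝ ((k : ℝ) • (‖x‖⁻¹ • x)) y : ℝ) : ℂ)) *
              (f : E3 → ℂ) y := by
          rw [integral_const_mul, add_comm]
  exact Tendsto.congr' heq key
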